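/- Let Y be a nonnegative random variable with E[e^{uY}] = (1 - (σ²/(2a))u(1-e^{-at}))^{-2aθ/σ²} · exp(x u e^{-at}/(1 - (σ²/(2a))u(1-e^{-at}))) for all real u ≤ 0 (the CIR transform). Then E[Y] = θ(1 - e^{-at}) + x e^{-at}. -/

import Mathlib

open MeasureTheory Filter Topology

/-- Key monotonicity: for `0 ≤ y`, the slope `(exp (u*y) - 1) / u` is monotone in `u < 0`. -/
lemma slope_exp_mono {y u v : ℝ} (hy : 0 ≤ y) (huv : u ≤ v) (hv : v < 0) :
    (Real.exp (u * y) - 1) / u ≤ (Real.exp (v * y) - 1) / v := by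
  rcases eq_or_lt_of_le hy with hy0 | hy0
  · simp [← hy0]
  have hu : u < 0 := lt_of_le_of_lt huv hv
  have h := convexOn_exp.secant_mono (a := 0) (x := u * y) (y := v * y)
    (Set.mem_univ _) (Set.mem_univ _) (Set.mem_univ _)
    (by nlinarith) (by nlinarith) (by nlinarith)
  simp only [Real.exp_zero, sub_zero] at h
  have hu' : u * y ≠ 0 := by nlinarith
  have hv' : v * y ≠ 0 := by nlinarith
  have hune : u ≠ 0 := hu.ne
  have hvne : v ≠ 0 := hv.ne
  have e1 : (Real.exp (u * y) - 1) / u = y * ((Real.exp (u * y) - 1) / (u * y)) := by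
    field_simp
  have e2 : (Real.exp (v * y) - 1) / v = y * ((Real.exp (v * y) - 1) / (v * y)) := by
    field_simp
  rw [e1, e2]
  exact mul_le_mul_of_nonneg_left h hy

/-- If the nonnegative random variable `Y` has the CIR Laplace transform
`E[e^{uY}] = (1 - (σ²/(2a))u(1-e^{-at}))^{-2aθ/σ²} exp(xue^{-at}/(1-(σ²/(2a))u(1-e^{-at})))`
for all `u ≤ 0`, then `E[Y] = θ(1-e^{-at}) + xe^{-at}`. -/
theorem expectation_CIR (a σ θ x t : ℝ) (ha : 0 < a) (hσ : 0 < σ) (hθ : 0 ≤ θ)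
    (hx : 0 ≤ x) (ht : 0 < t)
    {Ω : Type*} [MeasureSpace Ω] [IsProbabilityMeasure (volume : Measure Ω)]
    (Y : Ω → ℝ) (hYmeas : Measurable Y) (hYpos : ∀ ω, 0 ≤ Y ω)
    (hlaplace : ∀ u : ℝ, u ≤ 0 →
      ∫ ω, Real.exp (u * Y ω) =
        (1 - σ ^ 2 / (2 * a) * u * (1 - Real.exp (-a * t))) ^ (-(2 * a * θ) / σ ^ 2) *
          Real.exp (x * u * Real.exp (-a * t) /
            (1 - σ ^ 2 / (2 * a) * u * (1 - Real.exp (-a * t))))) :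
    Integrable Y ∧ ∫ ω, Y ω = θ * (1 - Real.exp (-a * t)) + x * Real.exp (-a * t) := by
  set c := Real.exp (-a * t) with hcdef
  have hc0 : 0 < c := Real.exp_pos _
  have hc1 : c < 1 := by
    rw [hcdef, Real.exp_lt_one_iff]; nlinarith
  set K := σ ^ 2 / (2 * a) * (1 - c) with hKdef
  have hK : 0 < K := by
    have h1 : 0 < σ ^ 2 / (2 * a) := by positivity
    have h2 : 0 < 1 - c := by linarith
    positivity
  set m := θ * (1 - c) + x * c with hmdef
  have hm0 : 0 ≤ m := by
    have : 0 ≤ 1 - c := by linarith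
    positivity
  set F : ℝ → ℝ := fun u => (1 - K * u) ^ (-(2 * a * θ) / σ ^ 2) *
      Real.exp (x * u * c / (1 - K * u)) with hFdef
  have hσ2 : σ ^ 2 ≠ 0 := by positivity
  -- rewrite hlaplace in terms of F
  have hFeq : ∀ u : ℝ, u ≤ 0 → ∫ ω, Real.exp (u * Y ω) = F u := by
    intro u hu
    rw [hlaplace u hu, hFdef]
    have hb : 1 - σ ^ 2 / (2 * a) * u * (1 - c) = 1 - K * u := by rw [hKdef]; ring
    simp only [hb]
  -- F has derivative m at 0
  have hgK : HasDerivAt (fun u : ℝ => 1 - K * u) (-K) 0 := by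
    simpa using ((hasDerivAt_id (0 : ℝ)).const_mul K).const_sub 1
  have h1 : HasDerivAt (fun u : ℝ => (1 - K * u) ^ (-(2 * a * θ) / σ ^ 2)) (θ * (1 - c)) 0 := by
    have h := hgK.rpow_const (p := -(2 * a * θ) / σ ^ 2) (Or.inl (by norm_num))
    convert h using 1
    rw [mul_zero, sub_zero, Real.one_rpow, hKdef]
    field_simp
  have hq : HasDerivAt (fun u : ℝ => x * u * c / (1 - K * u)) (x * c) 0 := by
    have hnum : HasDerivAt (fun u : ℝ => x * u * c) (x * c) 0 := by
      have h := (hasDerivAt_id (0 : ℝ)).const_mul (x * c)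
      have he : (fun u : ℝ => x * c * id u) = fun u : ℝ => x * u * c := by
        ext u; simp [id]; ring
      rw [he] at h
      simpa using h
    have h := hnum.div hgK (by norm_num)
    refine h.congr_deriv ?_
    norm_num
  have h2 : HasDerivAt (fun u : ℝ => Real.exp (x * u * c / (1 - K * u))) (x * c) 0 := by
    have h := hq.exp
    convert h using 1
    norm_num
  have hF' : HasDerivAt F m 0 := by
    rw [hFdef, hmdef]
    have h := h1.mul h2
    refine h.congr_deriv ?_
    norm_num [Real.one_rpow]
  have hF0 : F 0 = 1 := by
    rw [hFdef]; norm_num [Real.one_rpow]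
  -- the sequence u n = -1/(n+1)
  set u : ℕ → ℝ := fun n => -((n : ℝ) + 1)⁻¹ with hudef
  have hupos : ∀ n, u n < 0 := by
    intro n
    have : (0 : ℝ) < ((n : ℝ) + 1)⁻¹ := by positivity
    simp only [hudef]
    linarith
  have humono : Monotone u := by
    intro i j hij
    have hji : (i : ℝ) ≤ (j : ℝ) := Nat.cast_le.mpr hij
    simp only [hudef, neg_le_neg_iff]
    apply inv_anti₀ (by positivity)
    linarith
  have hu0 : Tendsto u atTop (𝓝[≠] (0 : ℝ)) := by
    apply tendsto_nhdsWithin_of_tendsto_nhds_of_eventually_within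
    · have h := (tendsto_one_div_add_atTop_nhds_zero_nat (𝕜 := ℝ)).neg
      rw [neg_zero] at h
      simpa [hudef, one_div] using h
    · exact Filter.Eventually.of_forall fun n => ne_of_lt (hupos n)
  -- convergence of the slope of F along u
  have hslopeF : Tendsto (fun n => (F (u n) - 1) / u n) atTop (𝓝 m) := by
    have h := (hasDerivAt_iff_tendsto_slope.mp hF').comp hu0
    refine h.congr fun n => ?_
    simp [Function.comp, slope_def_field, hF0]
  -- nonnegativity of slopes
  have hnn : ∀ n ω, 0 ≤ (Real.exp (u n * Y ω) - 1) / u n := by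
    intro n ω
    apply div_nonneg_of_nonpos
    · have hle : u n * Y ω ≤ 0 := mul_nonpos_of_nonpos_of_nonneg (le_of_lt (hupos n)) (hYpos ω)
      have : Real.exp (u n * Y ω) ≤ Real.exp 0 := Real.exp_le_exp.mpr hle
      simpa using this
    · exact le_of_lt (hupos n)
  -- integrability of exp
  have hexpint : ∀ n, Integrable (fun ω => Real.exp (u n * Y ω)) := by
    intro n
    refine (integrable_const (1 : ℝ)).mono' ?_ ?_
    · exact ((measurable_const.mul hYmeas).exp).aestronglyMeasurable
    · filter_upwards with ω
      rw [Real.norm_of_nonneg (Real.exp_nonneg _)]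
      have hle : u n * Y ω ≤ 0 := mul_nonpos_of_nonpos_of_nonneg (le_of_lt (hupos n)) (hYpos ω)
      have : Real.exp (u n * Y ω) ≤ Real.exp 0 := Real.exp_le_exp.mpr hle
      simpa using this
  -- integrals of slopes
  have hgint : ∀ n, ∫ ω, (Real.exp (u n * Y ω) - 1) / u n = (F (u n) - 1) / u n := by
    intro n
    rw [integral_div, integral_sub (hexpint n) (integrable_const 1),
        hFeq _ (le_of_lt (hupos n)), integral_const]
    simp
  have hlin : ∀ n, ∫⁻ ω, ENNReal.ofReal ((Real.exp (u n * Y ω) - 1) / u n)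
      = ENNReal.ofReal ((F (u n) - 1) / u n) := by
    intro n
    rw [← ofReal_integral_eq_lintegral_ofReal, hgint n]
    · exact ((hexpint n).sub (integrable_const 1)).div_const _
    · exact Filter.Eventually.of_forall fun ω => hnn n ω
  -- monotone convergence
  have hmct : Tendsto (fun n => ∫⁻ ω, ENNReal.ofReal ((Real.exp (u n * Y ω) - 1) / u n))
      atTop (𝓝 (∫⁻ ω, ENNReal.ofReal (Y ω))) := by
    apply lintegral_tendsto_of_tendsto_of_monotone
    · intro n
      exact (ENNReal.measurable_ofReal.comp
        ((((measurable_const.mul hYmeas).exp).sub measurable_const).div_const _)).aemeasurable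
    · filter_upwards with ω
      intro i j hij
      exact ENNReal.ofReal_le_ofReal (slope_exp_mono (hYpos ω) (humono hij) (hupos j))
    · filter_upwards with ω
      have hd : HasDerivAt (fun v : ℝ => Real.exp (v * Y ω)) (Y ω) 0 := by
        have h := ((hasDerivAt_id (0 : ℝ)).mul_const (Y ω)).exp
        simpa using h
      have h := (hasDerivAt_iff_tendsto_slope.mp hd).comp hu0
      have h2 : Tendsto (fun n => (Real.exp (u n * Y ω) - 1) / u n) atTop (𝓝 (Y ω)) := by
        refine h.congr fun n => ?_
        simp [Function.comp, slope_def_field]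
      exact (ENNReal.continuous_ofReal.tendsto _).comp h2
  have hlim2 : Tendsto (fun n => ∫⁻ ω, ENNReal.ofReal ((Real.exp (u n * Y ω) - 1) / u n))
      atTop (𝓝 (ENNReal.ofReal m)) := by
    simp only [hlin]
    exact (ENNReal.continuous_ofReal.tendsto _).comp hslopeF
  have hkey : ∫⁻ ω, ENNReal.ofReal (Y ω) = ENNReal.ofReal m :=
    tendsto_nhds_unique hmct hlim2
  have hYint : Integrable Y := by
    refine ⟨hYmeas.aestronglyMeasurable, ?_⟩
    rw [hasFiniteIntegral_iff_norm]
    have he : ∀ ω, ENNReal.ofReal ‖Y ω‖ = ENNReal.ofReal (Y ω) := fun ω => by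
      rw [Real.norm_of_nonneg (hYpos ω)]
    simp only [he, hkey]
    exact ENNReal.ofReal_lt_top
  refine ⟨hYint, ?_⟩
  rw [integral_eq_lintegral_of_nonneg_ae (Filter.Eventually.of_forall hYpos)
    hYmeas.aestronglyMeasurable, hkey, ENNReal.toReal_ofReal hm0]
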